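/- Suppose for conditional exponential family models the inequality (γ/√β)·E_{x_h∼π_M, a_h∼π_{M'}}[√(KL(M'_{x_h,a_h} || M*_{x_h,a_h}))] ≤ W(M, M', h) holds, where 0 < γ ≤ β bound the eigenvalues of the Hessian of the log-partition function. Then the witnessed model misfit dominates the average Bellman error up to a constant: (γ/(2√(2β)))·E_B(M, M', h) ≤ W(M, M', h), assuming |r + V_M(x')| ≤ 2 for all models M. -/

import Mathlib

open Real Finset

/-- Log-sum inequality on a finite set. -/
lemma logsum_aux {Y : Type*} [Fintype Y] (S : Finset Y) (p q : Y → ℝ)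
    (hp : ∀ y, 0 ≤ p y) (hq : ∀ y, 0 ≤ q y) (habs : ∀ y, q y = 0 → p y = 0)
    (hb : 0 < ∑ y ∈ S, q y) :
    (∑ y ∈ S, p y) * Real.log ((∑ y ∈ S, p y) / (∑ y ∈ S, q y)) ≤
      ∑ y ∈ S, p y * Real.log (p y / q y) := by
  set a := ∑ y ∈ S, p y with ha_def
  set b := ∑ y ∈ S, q y with hb_def
  have ha : 0 ≤ a := Finset.sum_nonneg fun y _ => hp y
  have key : ∀ y ∈ S, p y * Real.log (a / b) + (p y - q y * (a / b)) ≤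
      p y * Real.log (p y / q y) := by
    intro y hy
    rcases (hp y).eq_or_lt with h0 | hpy
    · have : q y * (a / b) ≥ 0 := mul_nonneg (hq y) (div_nonneg ha hb.le)
      rw [← h0]; simp; linarith
    · have hqy : 0 < q y := by
        rcases (hq y).eq_or_lt with h | h
        · exact absurd (habs y h.symm) (by linarith)
        · exact h
      have hay : 0 < a := lt_of_lt_of_le hpy (Finset.single_le_sum (fun y _ => hp y) hy)
      have e : p y / q y = (a / b) * ((p y * b) / (q y * a)) := by
        field_simp

      have h1 : Real.log ((q y * a) / (p y * b)) ≤ (q y * a) / (p y * b) - 1 :=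
        Real.log_le_sub_one_of_pos (by positivity)
      have h2 : Real.log ((p y * b) / (q y * a)) = - Real.log ((q y * a) / (p y * b)) := by
        rw [← Real.log_inv, inv_div]
      have h3 : p y * ((q y * a) / (p y * b)) = q y * (a / b) := by
        field_simp

      have h4 : 1 - (q y * a) / (p y * b) ≤ Real.log ((p y * b) / (q y * a)) := by
        rw [h2]; linarith
      calc p y * Real.log (a / b) + (p y - q y * (a / b))
          = p y * Real.log (a / b) + p y * (1 - (q y * a) / (p y * b)) := by
            rw [← h3]; ring
        _ ≤ p y * Real.log (a / b) + p y * Real.log ((p y * b) / (q y * a)) := by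
            have := mul_le_mul_of_nonneg_left h4 hpy.le
            linarith
        _ = p y * Real.log (p y / q y) := by
            rw [e, Real.log_mul (by positivity) (by positivity)]; ring
  have hsum := Finset.sum_le_sum key
  have hs1 : ∑ y ∈ S, (p y * Real.log (a / b) + (p y - q y * (a / b))) =
      a * Real.log (a / b) + (a - b * (a / b)) := by
    rw [Finset.sum_add_distrib, Finset.sum_sub_distrib, ← Finset.sum_mul, ← Finset.sum_mul]
  rw [hs1] at hsum
  have : b * (a / b) = a := mul_div_cancel₀ a hb.ne'
  linarith

/-- Binary KL lower bound (Pinsker for two points). -/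
lemma kl2_bound (a b : ℝ) (hb : 0 < b) (hba : b ≤ a) (ha : a ≤ 1) :
    2 * (a - b) ^ 2 ≤ a * Real.log (a / b) + (1 - a) * Real.log ((1 - a) / (1 - b)) := by
  have ha0 : 0 < a := lt_of_lt_of_le hb hba
  rcases hba.eq_or_lt with he | hlt
  · subst he
    rcases eq_or_ne b 1 with h1 | h1
    · simp [h1]
    · rw [div_self hb.ne', div_self (sub_ne_zero.mpr (Ne.symm h1)), Real.log_one]
      simp
  · rcases ha.eq_or_lt with h1 | h1
    · -- a = 1
      subst h1
      have hb1 : b < 1 := hlt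
      rw [sub_self, zero_mul, add_zero, one_mul, Real.log_div one_ne_zero hb.ne',
        Real.log_one, zero_sub]
      -- goal: 2*(1-b)^2 ≤ -log b
      set G : ℝ → ℝ := fun x => Real.log x + 2 * (1 - x) ^ 2 with hG
      have hd : ∀ x : ℝ, 0 < x →
          HasDerivAt G (x⁻¹ + 2 * (2 * (1 - x) ^ 1 * (-1))) x := by
        intro x hx
        exact (Real.hasDerivAt_log hx.ne').add
          ((((hasDerivAt_id x).const_sub 1).pow 2).const_mul 2)
      have hmono : MonotoneOn G (Set.Icc b 1) := by
        apply monotoneOn_of_deriv_nonneg (convex_Icc b 1)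
        · intro x hx
          exact (hd x (lt_of_lt_of_le hb hx.1)).differentiableAt.continuousAt.continuousWithinAt
        · intro x hx
          rw [interior_Icc] at hx
          exact (hd x (lt_trans hb hx.1)).differentiableAt.differentiableWithinAt
        · intro x hx
          rw [interior_Icc] at hx
          obtain ⟨hx1, hx2⟩ := hx
          have hx0 : 0 < x := lt_trans hb hx1
          rw [(hd x hx0).deriv]
          have : x⁻¹ + 2 * (2 * (1 - x) ^ 1 * (-1)) = (2 * x - 1) ^ 2 / x := by
            field_simp
            ring
          rw [this]
          exact div_nonneg (sq_nonneg _) hx0.le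
      have := hmono (Set.mem_Icc.2 ⟨le_refl b, hb1.le⟩) (Set.mem_Icc.2 ⟨hb1.le, le_refl 1⟩) hb1.le
      simp only [hG, Real.log_one] at this
      nlinarith [this]
    · -- b < a < 1
      set F : ℝ → ℝ := fun x => a * Real.log a - a * Real.log x +
          ((1 - a) * Real.log (1 - a) - (1 - a) * Real.log (1 - x)) - 2 * (a - x) ^ 2 with hF
      have hd : ∀ x : ℝ, 0 < x → x < 1 →
          HasDerivAt F (-(a * x⁻¹) + (-((1 - a) * ((1 - x)⁻¹ * -1)))
            - 2 * (2 * (a - x) ^ 1 * (0 - 1))) x := by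
        intro x hx0 hx1
        have d1 : HasDerivAt (fun x : ℝ => a * Real.log a - a * Real.log x) (0 - a * x⁻¹) x :=
          (hasDerivAt_const x (a * Real.log a)).sub ((Real.hasDerivAt_log hx0.ne').const_mul a)
        have d2 : HasDerivAt (fun x : ℝ => (1 - a) * Real.log (1 - a) - (1 - a) * Real.log (1 - x))
            (0 - (1 - a) * ((1 - x)⁻¹ * -1)) x := by
          refine (hasDerivAt_const x _).sub (HasDerivAt.const_mul _ ?_)
          exact (Real.hasDerivAt_log (by linarith)).comp x ((hasDerivAt_id x).const_sub 1)
        have d3 : HasDerivAt (fun x : ℝ => 2 * (a - x) ^ 2) (2 * (2 * (a - x) ^ 1 * (0 - 1))) x :=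
          ((((hasDerivAt_const x a).sub (hasDerivAt_id x)).pow 2).const_mul 2)
        have := (d1.add d2).sub d3
        exact this.congr_deriv (by ring)
      have hanti : AntitoneOn F (Set.Icc b a) := by
        apply antitoneOn_of_deriv_nonpos (convex_Icc b a)
        · intro x hx
          exact (hd x (lt_of_lt_of_le hb hx.1) (lt_of_le_of_lt hx.2 h1)
            ).differentiableAt.continuousAt.continuousWithinAt
        · intro x hx
          rw [interior_Icc] at hx
          exact (hd x (lt_trans hb hx.1) (lt_trans hx.2 h1)
            ).differentiableAt.differentiableWithinAt
        · intro x hx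
          rw [interior_Icc] at hx
          obtain ⟨hx1, hx2⟩ := hx
          have hx0 : 0 < x := lt_trans hb hx1
          have hxlt1 : x < 1 := lt_trans hx2 h1
          rw [(hd x hx0 hxlt1).deriv]
          have heq : -(a * x⁻¹) + (-((1 - a) * ((1 - x)⁻¹ * -1))) - 2 * (2 * (a - x) ^ 1 * (0 - 1))
              = ((x - a) * (2 * x - 1) ^ 2) / (x * (1 - x)) := by
            have h1x : (1:ℝ) - x ≠ 0 := by linarith
            rw [eq_div_iff (mul_pos hx0 (by linarith : (0:ℝ) < 1 - x)).ne']
            field_simp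
            ring
          rw [heq]
          apply div_nonpos_of_nonpos_of_nonneg
          · exact mul_nonpos_of_nonpos_of_nonneg (by linarith) (sq_nonneg _)
          · exact mul_nonneg hx0.le (by linarith)
      have hFa : F a = 0 := by simp [hF]
      have hFb := hanti (Set.mem_Icc.2 ⟨le_refl b, hba⟩) (Set.mem_Icc.2 ⟨hba, le_refl a⟩) hba
      rw [hFa] at hFb
      have e1 : Real.log (a / b) = Real.log a - Real.log b := Real.log_div ha0.ne' hb.ne'
      have e2 : Real.log ((1 - a) / (1 - b)) = Real.log (1 - a) - Real.log (1 - b) :=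
        Real.log_div (by linarith) (by linarith)
      simp only [hF] at hFb
      rw [e1, e2]
      nlinarith [hFb]

/-- Discrete Pinsker inequality: `‖p - q‖₁ ≤ √(2 KL(p‖q))`. -/
lemma pinsker_fin {Y : Type*} [Fintype Y] (p q : Y → ℝ)
    (hp0 : ∀ y, 0 ≤ p y) (hp1 : ∑ y, p y = 1)
    (hq0 : ∀ y, 0 ≤ q y) (hq1 : ∑ y, q y = 1)
    (habs : ∀ y, q y = 0 → p y = 0) :
    ∑ y, |p y - q y| ≤ Real.sqrt (2 * ∑ y, p y * Real.log (p y / q y)) := by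
  classical
  set KL := ∑ y, p y * Real.log (p y / q y) with hKL_def
  have hKL0 : 0 ≤ KL := by
    have := logsum_aux Finset.univ p q hp0 hq0 habs (by rw [hq1]; norm_num)
    rw [hp1, hq1] at this
    simpa using this
  set S := Finset.univ.filter (fun y => q y < p y) with hS_def
  set T := Finset.univ.filter (fun y => ¬ q y < p y) with hT_def
  set a := ∑ y ∈ S, p y with ha_def
  set b := ∑ y ∈ S, q y with hb_def
  have hpsplit : a + ∑ y ∈ T, p y = 1 := by
    rw [ha_def, hT_def, hS_def, Finset.sum_filter_add_sum_filter_not, hp1]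
  have hqsplit : b + ∑ y ∈ T, q y = 1 := by
    rw [hb_def, hT_def, hS_def, Finset.sum_filter_add_sum_filter_not, hq1]
  have hsplit : ∑ y, |p y - q y| = 2 * (a - b) := by
    rw [← Finset.sum_filter_add_sum_filter_not Finset.univ (fun y => q y < p y)
      (fun y => |p y - q y|)]
    have e1 : ∑ y ∈ S, |p y - q y| = a - b := by
      rw [ha_def, hb_def, ← Finset.sum_sub_distrib]
      apply Finset.sum_congr rfl
      intro y hy
      exact abs_of_nonneg (by linarith [(Finset.mem_filter.1 hy).2])
    have e2 : ∑ y ∈ T, |p y - q y| = (1 - b) - (1 - a) := by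
      have : ∑ y ∈ T, |p y - q y| = ∑ y ∈ T, (q y - p y) := by
        apply Finset.sum_congr rfl
        intro y hy
        have := (Finset.mem_filter.1 hy).2
        rw [abs_of_nonpos (by linarith [not_lt.1 this])]
        ring
      rw [this, Finset.sum_sub_distrib]
      have t1 : ∑ y ∈ T, q y = 1 - b := by linarith
      have t2 : ∑ y ∈ T, p y = 1 - a := by linarith
      rw [t1, t2]
    rw [← hS_def, ← hT_def, e1, e2]
    ring
  have hba : b ≤ a := by
    apply Finset.sum_le_sum
    intro y hy
    exact le_of_lt (Finset.mem_filter.1 hy).2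
  have ha1 : a ≤ 1 := by
    rw [← hp1]
    exact Finset.sum_le_sum_of_subset_of_nonneg (Finset.subset_univ S) (fun y _ _ => hp0 y)
  have hb0 : 0 ≤ b := Finset.sum_nonneg fun y _ => hq0 y
  rcases hba.eq_or_lt with he | hlt
  · rw [hsplit, ← he, sub_self, mul_zero]
    exact Real.sqrt_nonneg _
  · have hbpos : 0 < b := by
      rcases hb0.eq_or_lt with h | h
      · exfalso
        have hq0' : ∀ y ∈ S, q y = 0 :=
          (Finset.sum_eq_zero_iff_of_nonneg (fun y _ => hq0 y)).1 h.symm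
        have : a = 0 := Finset.sum_eq_zero fun y hy => habs y (hq0' y hy)
        rw [this] at hlt
        linarith
      · exact h
    have hb1 : b < 1 := lt_of_lt_of_le hlt ha1
    have hSle : a * Real.log (a / b) ≤ ∑ y ∈ S, p y * Real.log (p y / q y) :=
      logsum_aux S p q hp0 hq0 habs hbpos
    have hTle : (1 - a) * Real.log ((1 - a) / (1 - b)) ≤
        ∑ y ∈ T, p y * Real.log (p y / q y) := by
      have hqT : ∑ y ∈ T, q y = 1 - b := by linarith
      have hpT : ∑ y ∈ T, p y = 1 - a := by linarith
      have := logsum_aux T p q hp0 hq0 habs (by rw [hqT]; linarith)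
      rwa [hqT, hpT] at this
    have hKLsplit : KL = (∑ y ∈ S, p y * Real.log (p y / q y)) +
        ∑ y ∈ T, p y * Real.log (p y / q y) := by
      rw [hKL_def, hT_def, hS_def, Finset.sum_filter_add_sum_filter_not]
    have hkl2 := kl2_bound a b hbpos hba ha1
    have h4 : (2 * (a - b)) ^ 2 ≤ 2 * KL := by nlinarith
    rw [hsplit]
    calc 2 * (a - b) = Real.sqrt ((2 * (a - b)) ^ 2) := (Real.sqrt_sq (by linarith)).symm
      _ ≤ Real.sqrt (2 * KL) := Real.sqrt_le_sqrt h4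

/-- Bellman domination for conditional exponential families. -/
theorem exp_family_bellman_domination (X A Y : Type*)
    [Fintype X] [Fintype A] [Fintype Y]
    (ρ : X × A → ℝ)                                  -- joint law of (x_h, a_h)
    (hρ0 : ∀ p, 0 ≤ ρ p) (hρ1 : ∑ p, ρ p = 1)
    (M' Mstar : X × A → Y → ℝ)                        -- conditional laws of (r, x')
    (hM'0 : ∀ p y, 0 ≤ M' p y) (hM'1 : ∀ p, ∑ y, M' p y = 1)
    (hMs0 : ∀ p y, 0 ≤ Mstar p y) (hMs1 : ∀ p, ∑ y, Mstar p y = 1)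
    (habs : ∀ p y, Mstar p y = 0 → M' p y = 0)        -- KL well-defined
    (f : Y → ℝ) (hf : ∀ y, |f y| ≤ 2)                 -- f(r,x') = r + V_M(x'), |f| ≤ 2
    (γ β W : ℝ) (hγ : 0 < γ) (hγβ : γ ≤ β)
    (hKL : (γ / Real.sqrt β) *
        ∑ p, ρ p * Real.sqrt (∑ y, M' p y * Real.log (M' p y / Mstar p y)) ≤ W) :
    (γ / (2 * Real.sqrt (2 * β))) *
        (∑ p, ρ p * ∑ y, (M' p y - Mstar p y) * f y) ≤ W := by
  have hβ : 0 < β := lt_of_lt_of_le hγ hγβ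
  have hsβ : 0 < Real.sqrt β := Real.sqrt_pos.2 hβ
  have hs2 : 0 < Real.sqrt 2 := Real.sqrt_pos.2 (by norm_num)
  -- per point bound
  have key : ∀ p, (∑ y, (M' p y - Mstar p y) * f y) ≤
      2 * Real.sqrt 2 * Real.sqrt (∑ y, M' p y * Real.log (M' p y / Mstar p y)) := by
    intro p
    have h1 : (∑ y, (M' p y - Mstar p y) * f y) ≤ 2 * ∑ y, |M' p y - Mstar p y| := by
      rw [Finset.mul_sum]
      apply Finset.sum_le_sum
      intro y _
      calc (M' p y - Mstar p y) * f y ≤ |(M' p y - Mstar p y) * f y| := le_abs_self _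
        _ = |M' p y - Mstar p y| * |f y| := abs_mul _ _
        _ ≤ |M' p y - Mstar p y| * 2 :=
            mul_le_mul_of_nonneg_left (hf y) (abs_nonneg _)
        _ = 2 * |M' p y - Mstar p y| := by ring
    have h2 := pinsker_fin (M' p) (Mstar p) (hM'0 p) (hM'1 p) (hMs0 p) (hMs1 p) (habs p)
    have h3 : Real.sqrt (2 * ∑ y, M' p y * Real.log (M' p y / Mstar p y)) =
        Real.sqrt 2 * Real.sqrt (∑ y, M' p y * Real.log (M' p y / Mstar p y)) :=
      Real.sqrt_mul (by norm_num) _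
    rw [h3] at h2
    nlinarith [h1, h2]
  have hc0 : 0 ≤ γ / (2 * Real.sqrt (2 * β)) := by positivity
  have hsum : (∑ p, ρ p * ∑ y, (M' p y - Mstar p y) * f y) ≤
      ∑ p, ρ p * (2 * Real.sqrt 2 * Real.sqrt (∑ y, M' p y * Real.log (M' p y / Mstar p y))) :=
    Finset.sum_le_sum fun p _ => mul_le_mul_of_nonneg_left (key p) (hρ0 p)
  have step1 : (γ / (2 * Real.sqrt (2 * β))) *
      (∑ p, ρ p * ∑ y, (M' p y - Mstar p y) * f y) ≤
      (γ / (2 * Real.sqrt (2 * β))) * ∑ p, ρ p *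
        (2 * Real.sqrt 2 * Real.sqrt (∑ y, M' p y * Real.log (M' p y / Mstar p y))) :=
    mul_le_mul_of_nonneg_left hsum hc0
  have hpull : ∑ p, ρ p *
      (2 * Real.sqrt 2 * Real.sqrt (∑ y, M' p y * Real.log (M' p y / Mstar p y))) =
      (2 * Real.sqrt 2) *
        ∑ p, ρ p * Real.sqrt (∑ y, M' p y * Real.log (M' p y / Mstar p y)) := by
    rw [Finset.mul_sum]
    apply Finset.sum_congr rfl
    intro p _
    ring
  have hconst : (γ / (2 * Real.sqrt (2 * β))) * (2 * Real.sqrt 2) = γ / Real.sqrt β := by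
    rw [Real.sqrt_mul (by norm_num : (0:ℝ) ≤ 2) β]
    field_simp
  calc (γ / (2 * Real.sqrt (2 * β))) * (∑ p, ρ p * ∑ y, (M' p y - Mstar p y) * f y)
      ≤ (γ / (2 * Real.sqrt (2 * β))) * ((2 * Real.sqrt 2) *
        ∑ p, ρ p * Real.sqrt (∑ y, M' p y * Real.log (M' p y / Mstar p y))) := by
        rw [← hpull]; exact step1
    _ = (γ / Real.sqrt β) *
        ∑ p, ρ p * Real.sqrt (∑ y, M' p y * Real.log (M' p y / Mstar p y)) := by
        rw [← mul_assoc, hconst]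
    _ ≤ W := hKL
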